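/- Consider the ODE ν̇(t)ᵀ = ν(t)ᵀA - (ν(t)ᵀA𝟙)ν(t)ᵀ on ℝⁿ, where A is a matrix with nonnegative entries. Any solution ν with ν(0) in the probability simplex satisfies the Duhamel representation ν(t)ᵀ = ν(0)ᵀ exp(At) · exp(-∫₀ᵗ ν(s)ᵀA𝟙 ds), and consequently ν(t) remains in the probability simplex for all t ≥ 0. -/

import Mathlib

open Matrix

section MatrixExpAux

attribute [local instance] Matrix.linftyOpNormedRing Matrix.linftyOpNormedAlgebra

/-- entries of `exp` of an entrywise-nonnegative matrix are nonnegative. -/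
lemma exp_entry_nonneg {n : ℕ} (B : Matrix (Fin n) (Fin n) ℝ)
    (hB : ∀ i j, 0 ≤ B i j) (i j : Fin n) : 0 ≤ NormedSpace.exp B i j := by
  have hpow : ∀ (k : ℕ) (i j : Fin n), 0 ≤ (B ^ k) i j := by
    intro k
    induction k with
    | zero => intro i j; simp [Matrix.one_apply]; positivity
    | succ k ih =>
      intro i j
      rw [pow_succ, Matrix.mul_apply]
      exact Finset.sum_nonneg fun l _ => mul_nonneg (ih i l) (hB l j)
  have hsum : HasSum (fun k : ℕ => (k.factorial⁻¹ : ℝ) • B ^ k) (NormedSpace.exp B) := by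
    rw [NormedSpace.exp_eq_tsum (𝕂 := ℝ)]
    exact (NormedSpace.expSeries_summable' B).hasSum
  have hmap : HasSum (fun k : ℕ => ((k.factorial⁻¹ : ℝ) • B ^ k) i j)
      (NormedSpace.exp B i j) :=
    hsum.map (AddMonoidHom.mk ⟨fun M : Matrix (Fin n) (Fin n) ℝ => M i j, rfl⟩
        (fun _ _ => rfl))
      ((continuous_apply j).comp (continuous_apply i))
  refine hmap.nonneg fun k => ?_
  have : ((k.factorial⁻¹ : ℝ) • B ^ k) i j = (k.factorial⁻¹ : ℝ) * (B ^ k) i j := rfl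
  rw [this]
  exact mul_nonneg (by positivity) (hpow k i j)

/-- `exp (t•M) * exp (-t•M) = 1`. -/
lemma exp_smul_mul_exp_neg_smul {n : ℕ} (M : Matrix (Fin n) (Fin n) ℝ) (t : ℝ) :
    NormedSpace.exp (t • M) * NormedSpace.exp ((-t) • M) = 1 := by
  rw [← Matrix.exp_add_of_commute]
  · simp
  · exact ((Commute.refl M).smul_left t).smul_right (-t)

/-- `M` commutes with `exp (s•M)`. -/
lemma exp_smul_comm {n : ℕ} (M : Matrix (Fin n) (Fin n) ℝ) (s : ℝ) :
    M * NormedSpace.exp (s • M) = NormedSpace.exp (s • M) * M :=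
  (((Commute.refl M).smul_right s).exp_right)

private def entryCLM {n : ℕ} (i j : Fin n) : Matrix (Fin n) (Fin n) ℝ →L[ℝ] ℝ where
  toFun := fun M => M i j
  map_add' := fun _ _ => rfl
  map_smul' := fun _ _ => rfl
  cont := (continuous_apply j).comp (continuous_apply i)

/-- entrywise derivative of `t ↦ exp (-t • M)`. -/
lemma hasDerivAt_exp_neg_smul_entry {n : ℕ} (M : Matrix (Fin n) (Fin n) ℝ)
    (t : ℝ) (i j : Fin n) :
    HasDerivAt (fun u : ℝ => NormedSpace.exp ((-u) • M) i j)
      (-((M * NormedSpace.exp ((-t) • M)) i j)) t := by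
  have h : HasDerivAt (fun u : ℝ => NormedSpace.exp (u • M))
      (M * NormedSpace.exp ((-t) • M)) (-t) := hasDerivAt_exp_smul_const' M (-t)
  have hneg : HasDerivAt (fun u : ℝ => -u) (-1 : ℝ) t := (hasDerivAt_id t).neg
  have h2 : HasDerivAt (fun u : ℝ => NormedSpace.exp ((-u) • M))
      ((-1 : ℝ) • (M * NormedSpace.exp ((-t) • M))) t := h.scomp t hneg
  have h3 := (entryCLM i j).hasFDerivAt.comp_hasDerivAt t h2
  have h4 : HasDerivAt (fun u : ℝ => NormedSpace.exp ((-u) • M) i j)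
      ((entryCLM i j) ((-1 : ℝ) • (M * NormedSpace.exp ((-t) • M)))) t := h3
  refine h4.congr_deriv ?_
  simp [entryCLM]
  rfl

end MatrixExpAux

/-- any solution of `ν̇ᵀ = νᵀA - (νᵀA𝟙)νᵀ` starting in the
probability simplex satisfies the Duhamel representation
`ν(t)ᵀ = ν(0)ᵀ exp(At) exp(-∫₀ᵗ ν(s)ᵀA𝟙 ds)` and remains in the simplex. -/
theorem duhamel_simplex_invariance {n : ℕ} (A : Matrix (Fin n) (Fin n) ℝ)
    (hAnonneg : ∀ i j, 0 ≤ A i j)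
    (ν : ℝ → Fin n → ℝ)
    (hode : ∀ t : ℝ, HasDerivAt ν
      ((Aᵀ).mulVec (ν t) - ((ν t) ⬝ᵥ A.mulVec (fun _ => 1)) • (ν t)) t)
    (h0nonneg : ∀ i, 0 ≤ ν 0 i) (h0sum : (∑ i, ν 0 i) = 1) :
    ∀ t : ℝ, 0 ≤ t →
      (ν t = Real.exp (-(∫ s in (0 : ℝ)..t, (ν s) ⬝ᵥ A.mulVec (fun _ => 1))) •
          Matrix.vecMul (ν 0) (NormedSpace.exp (t • A))) ∧
      (∀ i, 0 ≤ ν t i) ∧ (∑ i, ν t i) = 1 := by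
  set c : ℝ → ℝ := fun t => (ν t) ⬝ᵥ A.mulVec (fun _ => 1) with hc_def
  -- continuity
  have hν_cont : Continuous ν :=
    continuous_iff_continuousAt.mpr fun t => (hode t).continuousAt
  have hc_cont : Continuous c := by
    have : Continuous fun t => ∑ j, ν t j * (A.mulVec (fun _ => 1)) j :=
      continuous_finset_sum _ fun j _ =>
        ((continuous_apply j).comp hν_cont).mul continuous_const
    exact this
  -- the integral
  set C : ℝ → ℝ := fun t => ∫ s in (0:ℝ)..t, c s with hC_def
  have hC : ∀ t, HasDerivAt C (c t) t := fun t =>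
    intervalIntegral.integral_hasDerivAt_right (hc_cont.intervalIntegrable _ _)
      (hc_cont.stronglyMeasurableAtFilter _ _) hc_cont.continuousAt
  have hC0 : C 0 = 0 := intervalIntegral.integral_same
  -- μ
  set μ : ℝ → Fin n → ℝ := fun t => Real.exp (C t) • ν t with hμ_def
  have hμ : ∀ t, HasDerivAt μ ((Aᵀ).mulVec (μ t)) t := by
    intro t
    have h1 : HasDerivAt (fun t => Real.exp (C t)) (Real.exp (C t) * c t) t :=
      (hC t).exp
    have h2 := h1.smul (hode t)
    refine h2.congr_deriv ?_
    symm
    simp only [hμ_def, Matrix.mulVec_smul, smul_sub, smul_smul]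
    ext i
    simp [Matrix.mulVec, smul_sub, mul_comm]
    simp only [hc_def]
    ring
  have hμj : ∀ t j, HasDerivAt (fun t => μ t j) (((Aᵀ).mulVec (μ t)) j) t :=
    fun t j => (hasDerivAt_pi.mp (hμ t)) j
  -- w
  set F : ℝ → Matrix (Fin n) (Fin n) ℝ := fun t => NormedSpace.exp ((-t) • Aᵀ)
    with hF_def
  set w : ℝ → Fin n → ℝ := fun t => (F t).mulVec (μ t) with hw_def
  have hw : ∀ t i, HasDerivAt (fun t => w t i) 0 t := by
    intro t i
    have hterm : ∀ j, HasDerivAt (fun t => F t i j * μ t j)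
        (-((Aᵀ * F t) i j) * μ t j + F t i j * ((Aᵀ).mulVec (μ t)) j) t :=
      fun j => (hasDerivAt_exp_neg_smul_entry Aᵀ t i j).mul (hμj t j)
    have hsum : HasDerivAt (fun t => ∑ j, F t i j * μ t j)
        (∑ j, (-((Aᵀ * F t) i j) * μ t j + F t i j * ((Aᵀ).mulVec (μ t)) j)) t :=
      HasDerivAt.fun_sum (fun j _ => hterm j)
    have hzero : (∑ j, (-((Aᵀ * F t) i j) * μ t j + F t i j * ((Aᵀ).mulVec (μ t)) j)) = 0 := by
      rw [Finset.sum_add_distrib]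
      have h1 : ∑ j, -((Aᵀ * F t) i j) * μ t j = -(((Aᵀ * F t).mulVec (μ t)) i) := by
        simp [Matrix.mulVec, dotProduct, Finset.sum_neg_distrib, neg_mul]
      have h2 : ∑ j, F t i j * ((Aᵀ).mulVec (μ t)) j = (((F t) * Aᵀ).mulVec (μ t)) i := by
        rw [← Matrix.mulVec_mulVec]
        simp [Matrix.mulVec, dotProduct]
      have hcomm : F t * Aᵀ = Aᵀ * F t := (exp_smul_comm Aᵀ (-t)).symm
      rw [h1, h2, hcomm, neg_add_cancel]
    have : HasDerivAt (fun t => ∑ j, F t i j * μ t j) 0 t := hzero ▸ hsum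
    convert this using 2
    rfl
  have hwconst : ∀ t, w t = w 0 := by
    intro t
    funext i
    exact is_const_of_deriv_eq_zero
      (fun x => (hw x i).differentiableAt) (fun x => (hw x i).deriv) t 0
  have hF0 : F 0 = 1 := by
    simp [hF_def, NormedSpace.exp_zero]
  have hw0 : w 0 = ν 0 := by
    simp [hw_def, hF0, hμ_def, hC0, Matrix.one_mulVec]
  -- Duhamel
  have hμ_eq : ∀ t, μ t = Matrix.vecMul (ν 0) (NormedSpace.exp (t • A)) := by
    intro t
    have h1 : (NormedSpace.exp (t • Aᵀ)).mulVec (w t) = μ t := by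
      rw [hw_def]
      simp only []
      rw [Matrix.mulVec_mulVec, hF_def, exp_smul_mul_exp_neg_smul, Matrix.one_mulVec]
    rw [hwconst t, hw0] at h1
    rw [← h1]
    have h2 : NormedSpace.exp (t • Aᵀ) = (NormedSpace.exp (t • A))ᵀ := by
      rw [← Matrix.transpose_smul, Matrix.exp_transpose]
    rw [h2, Matrix.mulVec_transpose]
  have hν_eq : ∀ t, ν t
      = Real.exp (-(C t)) • Matrix.vecMul (ν 0) (NormedSpace.exp (t • A)) := by
    intro t
    rw [← hμ_eq t, hμ_def]
    simp only []
    rw [smul_smul, ← Real.exp_add, neg_add_cancel, Real.exp_zero, one_smul]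
  -- sum = 1
  have hνj : ∀ t j, HasDerivAt (fun t => ν t j)
      (((Aᵀ).mulVec (ν t) - (c t) • (ν t)) j) t :=
    fun t j => (hasDerivAt_pi.mp (hode t)) j
  have hS : ∀ t, HasDerivAt (fun t => ∑ i, ν t i) (c t * (1 - ∑ i, ν t i)) t := by
    intro t
    have h := HasDerivAt.fun_sum (fun i (_ : i ∈ Finset.univ) => hνj t i)
    refine h.congr_deriv ?_
    symm
    have h1 : ∑ i, ((Aᵀ).mulVec (ν t)) i = c t := by
      simp only [hc_def, Matrix.mulVec, dotProduct, Matrix.transpose_apply]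
      rw [Finset.sum_comm]
      simp [mul_comm, Finset.mul_sum]
    have h2 : (∑ i, ((Aᵀ).mulVec (ν t) - (c t) • (ν t)) i)
        = (∑ i, ((Aᵀ).mulVec (ν t)) i) - c t * ∑ i, ν t i := by
      simp [Finset.sum_sub_distrib, Finset.mul_sum]
    rw [h2, h1]
    ring
  have hsum_one : ∀ t, (∑ i, ν t i) = 1 := by
    have hφ : ∀ t, HasDerivAt (fun t => ((∑ i, ν t i) - 1) * Real.exp (C t)) 0 t := by
      intro t
      have h := ((hS t).sub_const 1).mul (hC t).exp
      refine h.congr_deriv ?_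
      symm
      ring
    intro t
    have hconst := is_const_of_deriv_eq_zero
      (fun x => (hφ x).differentiableAt) (fun x => (hφ x).deriv) t 0
    rw [hC0, h0sum] at hconst
    simp at hconst
    linarith
  -- conclusion
  intro t ht
  refine ⟨hν_eq t, ?_, hsum_one t⟩
  intro i
  rw [hν_eq t]
  have hEnn : ∀ k l, 0 ≤ NormedSpace.exp (t • A) k l :=
    exp_entry_nonneg (t • A) (fun k l => by
      have : (t • A) k l = t * A k l := rfl
      rw [this]; exact mul_nonneg ht (hAnonneg k l))
  have : (Matrix.vecMul (ν 0) (NormedSpace.exp (t • A))) i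
      = ∑ j, ν 0 j * NormedSpace.exp (t • A) j i := by
    simp [Matrix.vecMul, dotProduct]
  have hnn : 0 ≤ (Matrix.vecMul (ν 0) (NormedSpace.exp (t • A))) i := by
    rw [this]
    exact Finset.sum_nonneg fun j _ => mul_nonneg (h0nonneg j) (hEnn j i)
  have happ : (Real.exp (-(C t)) • Matrix.vecMul (ν 0) (NormedSpace.exp (t • A))) i
      = Real.exp (-(C t)) * (Matrix.vecMul (ν 0) (NormedSpace.exp (t • A))) i := rfl
  rw [happ]
  exact mul_nonneg (Real.exp_nonneg _) hnn
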